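/- Let n be a natural number with n ≡ 6 (mod 8). For 0 ≤ k ≤ n/2 define the rational numbers c_k by: c_k = 0 if k is even, and c_k = 2·(−1)^((k−1)/2 + 1) · n · (∏_{λ=1}^{(k−1)/2} (n² − (4λ−2)²)) / (4^k · k!) if k is odd (the product being empty, hence 1, when k = 1). Then every c_k is an integer, and for all complex numbers x, y: x^n + y^n = ∑_{k=0}^{n/2} c_k · (x·y)^(n/2 − k) · (x² + y²)^k. -/

import Mathlib

open Finset
def elNN : ℕ → ℕ → ℤ
  | 0, 0 => 2
  | 0, _+1 => 0
  | 1, 0 => 1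
  | 1, _+1 => 0
  | m+2, 0 => elNN (m+1) 0
  | m+2, j+1 => elNN (m+1) (j+1) + elNN m j

lemma elNN_vanish : ∀ m j, m < 2*j → elNN m j = 0
  | 0, _+1, _ => rfl
  | 1, _+1, _ => rfl
  | m+2, j+1, h => by
      rw [elNN, elNN_vanish (m+1) (j+1) (by omega), elNN_vanish m j (by omega)]
      ring
  | 0, 0, h => absurd h (by omega)
  | 1, 0, h => absurd h (by omega)
  | _+2, 0, h => absurd h (by omega)

lemma elNN_zero : ∀ m, 1 ≤ m → elNN m 0 = 1
  | 1, _ => rfl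
  | m+2, _ => by rw [elNN]; exact elNN_zero (m+1) (by omega)
  | 0, h => absurd h (by omega)

lemma elNN_diag : ∀ j, elNN (2*(j+1)) (j+1) = 2
  | 0 => rfl
  | j+1 => by
      have h : 2*(j+2) = (2*j+2)+2 := by ring
      rw [h, elNN, elNN_vanish (2*j+3) (j+2) (by omega),
        show 2*j+2 = 2*(j+1) from by ring, elNN_diag j]
      ring

lemma elNN_formula : ∀ (j t : ℕ), (elNN (2*j+t+1) j : ℚ) =
    ((2*j+t+1 : ℕ) : ℚ) * (j+t).factorial / ((j.factorial : ℚ) * ((t+1).factorial : ℚ))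
  | 0, t => by
      rw [show 2*0+t+1 = t+1 from by ring, elNN_zero (t+1) (by omega)]
      have h1 : ((t+1).factorial : ℚ) = (t+1) * t.factorial := by
        rw [Nat.factorial_succ]; push_cast; ring
      have h2 : (t.factorial : ℚ) ≠ 0 := by positivity
      simp only [Nat.factorial_zero, h1]
      push_cast
      field_simp
      rw [zero_add]
  | j+1, 0 => by
      have h : 2*(j+1)+0+1 = (2*j+0+1)+2 := by ring
      rw [h, elNN, show 2*j+0+1+1 = 2*(j+1) from by ring, elNN_diag j]
      push_cast [elNN_formula j 0]
      have h2 : (j.factorial : ℚ) ≠ 0 := by positivity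
      have h3 : ((j+1).factorial : ℚ) = (j+1) * j.factorial := by
        rw [Nat.factorial_succ]; push_cast; ring
      simp only [Nat.factorial_one, Nat.factorial_zero, add_zero, h3]
      field_simp
      ring
  | j+1, t+1 => by
      have h : 2*(j+1)+(t+1)+1 = (2*j+(t+1)+1)+2 := by ring
      rw [h, elNN, show 2*j+(t+1)+1+1 = 2*(j+1)+t+1 from by ring]
      push_cast [elNN_formula (j+1) t, elNN_formula j (t+1)]
      have e1 : j+1+t = j+t+1 := by ring
      have e2 : j+(t+1) = j+t+1 := by ring
      rw [e1, e2, show j+1+(t+1) = (j+t+1)+1 from by ring]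
      rw [Nat.factorial_succ (j+t+1), Nat.factorial_succ (t+1), Nat.factorial_succ t,
        Nat.factorial_succ j]
      have h2 : (j.factorial : ℚ) ≠ 0 := by positivity
      have h3 : (t.factorial : ℚ) ≠ 0 := by positivity
      have h4 : ((j+t+1).factorial : ℚ) ≠ 0 := by positivity
      push_cast
      field_simp
      ring
  termination_by j t => 2*j + t

lemma elNN_expand : ∀ (m : ℕ) (x y : ℂ), x^m + y^m =
    ∑ j ∈ Finset.range (m+2), (elNN m j : ℂ) * (-1)^j * (x*y)^j * (x+y)^(m - 2*j)
  | 0, x, y => by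
      simp [Finset.sum_range_succ, elNN]
      norm_num
  | 1, x, y => by
      norm_num [Finset.sum_range_succ, show elNN 1 0 = 1 from rfl,
        show elNN 1 1 = 0 from rfl, show elNN 1 2 = 0 from rfl]
  | m+2, x, y => by
      have key : x^(m+2) + y^(m+2)
          = (x+y)*(x^(m+1)+y^(m+1)) - (x*y)*(x^m+y^m) := by ring
      rw [key, elNN_expand (m+1) x y, elNN_expand m x y]
      rw [Finset.sum_range_succ' _ (m+3)]
      have hsplit : ∀ j ∈ Finset.range (m+3),
          ((elNN (m+2) (j+1) : ℂ) * (-1)^(j+1) * (x*y)^(j+1) * (x+y)^((m+2) - 2*(j+1)))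
          = ((elNN (m+1) (j+1) : ℂ) * (-1)^(j+1) * (x*y)^(j+1) * (x+y)^((m+2) - 2*(j+1)))
            + ((elNN m j : ℂ) * (-1)^(j+1) * (x*y)^(j+1) * (x+y)^((m+2) - 2*(j+1))) := by
        intro j _
        rw [show elNN (m+2) (j+1) = elNN (m+1) (j+1) + elNN m j from rfl]
        push_cast
        ring
      rw [Finset.sum_congr rfl hsplit, Finset.sum_add_distrib]
      have hA : ∑ j ∈ Finset.range (m+3),
          ((elNN (m+1) (j+1) : ℂ) * (-1)^(j+1) * (x*y)^(j+1) * (x+y)^((m+2) - 2*(j+1)))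
          = ∑ j ∈ Finset.range (m+2),
            (x+y) * ((elNN (m+1) (j+1) : ℂ) * (-1)^(j+1) * (x*y)^(j+1) * (x+y)^((m+1) - 2*(j+1))) := by
        rw [Finset.sum_range_succ, elNN_vanish (m+1) (m+3) (by omega)]
        simp only [Int.cast_zero, zero_mul, add_zero]
        refine Finset.sum_congr rfl fun j _ => ?_
        rcases le_or_gt (2*j+1) m with h | h
        · rw [show (m+2) - 2*(j+1) = ((m+1) - 2*(j+1)) + 1 from by omega, pow_succ]
          ring
        · rw [elNN_vanish (m+1) (j+1) (by omega)]
          simp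
      have hB : ∑ j ∈ Finset.range (m+3),
          ((elNN m j : ℂ) * (-1)^(j+1) * (x*y)^(j+1) * (x+y)^((m+2) - 2*(j+1)))
          = -((x*y) * ∑ j ∈ Finset.range (m+2),
              (elNN m j : ℂ) * (-1)^j * (x*y)^j * (x+y)^(m - 2*j)) := by
        rw [Finset.sum_range_succ, elNN_vanish m (m+2) (by omega)]
        simp only [Int.cast_zero, zero_mul, add_zero]
        rw [Finset.mul_sum, ← Finset.sum_neg_distrib]
        refine Finset.sum_congr rfl fun j _ => ?_
        rw [show (m+2) - 2*(j+1) = m - 2*j from by omega]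
        ring
      rw [hA, hB]
      conv_lhs => rw [show (m+1)+2 = (m+2)+1 from rfl, Finset.sum_range_succ' _ (m+2)]
      rw [elNN_zero (m+1) (by omega), elNN_zero (m+2) (by omega), mul_add, Finset.mul_sum]
      norm_num
      ring

lemma el_prod_eval (n a : ℕ) (hn : n = 4*a+2) : ∀ r, r ≤ a →
    ∏ l ∈ Finset.Icc 1 r, ((n:ℚ)^2 - (4*(l:ℚ)-2)^2)
      = 16^r * ((a+r).factorial : ℚ) / (((a-r).factorial : ℚ)) := by
  intro r
  induction r with
  | zero =>
    intro _
    simp only [Finset.Icc_self, Nat.add_zero, Nat.sub_zero, pow_zero, one_mul]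
    rw [show Finset.Icc 1 0 = (∅ : Finset ℕ) from rfl, Finset.prod_empty,
      div_self (by positivity : ((a.factorial:ℚ)) ≠ 0)]
  | succ r ih =>
    intro h
    rw [Finset.prod_Icc_succ_top (by omega : 1 ≤ r+1), ih (by omega)]
    obtain ⟨d, hd⟩ : ∃ d, a = r+1+d := ⟨a-r-1, by omega⟩
    subst hd
    rw [show r+1+d - r = d+1 from by omega, show r+1+d-(r+1) = d from by omega,
        show r+1+d+(r+1) = (r+1+d+r)+1 from by omega]
    rw [Nat.factorial_succ (r+1+d+r), Nat.factorial_succ d]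
    have hnq : (n:ℚ) = 4*((r:ℚ)+1+(d:ℚ))+2 := by rw [hn]; push_cast; ring
    rw [hnq]
    have h1 : (d.factorial : ℚ) ≠ 0 := by positivity
    have h2 : ((r+1+d+r).factorial : ℚ) ≠ 0 := by positivity
    push_cast
    field_simp
    ring

lemma el_key_coeff (n a : ℕ) (hn : n = 4*a+2) (ha : a % 2 = 1) (c : ℕ → ℚ)
    (hc_odd : ∀ k ≤ n / 2, k % 2 = 1 →
      c k = 2 * (-1 : ℚ) ^ ((k - 1) / 2 + 1) * (n : ℚ) *
        (∏ l ∈ Finset.Icc 1 ((k - 1) / 2), ((n : ℚ) ^ 2 - (4 * (l : ℚ) - 2) ^ 2)) /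
        (4 ^ k * (Nat.factorial k : ℚ)))
    (j : ℕ) (hj : j ≤ a) :
    c (2*a+1 - 2*j) = (-1)^j * ((elNN (2*a+1) j : ℤ) : ℚ) := by
  obtain ⟨r, hr⟩ : ∃ r, a = j + r := ⟨a - j, by omega⟩
  rw [show 2*a+1 - 2*j = 2*r+1 from by omega]
  have hk := hc_odd (2*r+1) (by omega) (by omega)
  rw [show (2*r+1-1)/2 = r from by omega] at hk
  have hprod := el_prod_eval n a hn r (by omega)
  rw [show a - r = j from by omega] at hprod
  have hN : ((elNN (2*a+1) j : ℤ):ℚ)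
      = ((2*j+2*r+1 : ℕ) : ℚ) * ((j + 2*r).factorial:ℚ)
        / ((j.factorial:ℚ) * (((2*r)+1).factorial:ℚ)) := by
    rw [show 2*a+1 = 2*j+(2*r)+1 from by omega]
    exact elNN_formula j (2*r)
  have hsign : ((-1:ℚ))^(r+1) = (-1)^j := by
    rcases Nat.even_or_odd j with hj2 | hj2
    · have hj2' : j % 2 = 0 := Nat.even_iff.mp hj2
      have he : Even (r+1) := Nat.even_iff.mpr (by omega)
      rw [hj2.neg_one_pow, he.neg_one_pow]
    · have hj2' : j % 2 = 1 := Nat.odd_iff.mp hj2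
      have he : Odd (r+1) := Nat.odd_iff.mpr (by omega)
      rw [hj2.neg_one_pow, he.neg_one_pow]
  have h4 : (4:ℚ)^(2*r+1) = 4 * 16^r := by
    rw [pow_succ, pow_mul]; norm_num; ring
  have hnq : (n:ℚ) = 4*((j:ℚ)+(r:ℚ))+2 := by rw [hn, hr]; push_cast; ring
  rw [hk, hprod, hN, hsign, h4, hnq, show j + 2*r = a + r from by omega]
  have h1 : (j.factorial : ℚ) ≠ 0 := by positivity
  have h2 : ((2*r+1).factorial : ℚ) ≠ 0 := by positivity
  have h3 : ((a+r).factorial : ℚ) ≠ 0 := by positivity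
  push_cast
  field_simp
  ring

/-- The case `n ≡ 6 (mod 8)` of the Eight Levels Theorem. -/
theorem eight_levels_mod8_six (n : ℕ) (hn : n % 8 = 6) (c : ℕ → ℚ)
    (hc_even : ∀ k ≤ n / 2, k % 2 = 0 → c k = 0)
    (hc_odd : ∀ k ≤ n / 2, k % 2 = 1 →
      c k = 2 * (-1 : ℚ) ^ ((k - 1) / 2 + 1) * (n : ℚ) *
        (∏ l ∈ Finset.Icc 1 ((k - 1) / 2), ((n : ℚ) ^ 2 - (4 * (l : ℚ) - 2) ^ 2)) /
        (4 ^ k * (Nat.factorial k : ℚ))) :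
    (∀ k ≤ n / 2, ∃ z : ℤ, c k = (z : ℚ)) ∧
    ∀ x y : ℂ, x ^ n + y ^ n =
      ∑ k ∈ Finset.range (n / 2 + 1),
        (c k : ℂ) * (x * y) ^ (n / 2 - k) * (x ^ 2 + y ^ 2) ^ k := by
  obtain ⟨a, ha⟩ : ∃ a, n = 4*a+2 := ⟨(n-2)/4, by omega⟩
  have ham : n / 2 = 2*a+1 := by omega
  have ha2 : a % 2 = 1 := by omega
  have key : ∀ j ≤ a, c (2*a+1 - 2*j) = (-1)^j * ((elNN (2*a+1) j : ℤ) : ℚ) :=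
    el_key_coeff n a ha ha2 c hc_odd
  constructor
  · intro k hk
    rw [ham] at hk
    by_cases hpar : k % 2 = 0
    · exact ⟨0, by rw [hc_even k (by omega) hpar]; simp⟩
    · refine ⟨(-1)^((2*a+1-k)/2) * elNN (2*a+1) ((2*a+1-k)/2), ?_⟩
      have h1 := key ((2*a+1-k)/2) (by omega)
      rw [show 2*a+1 - 2*((2*a+1-k)/2) = k from by omega] at h1
      rw [h1]; push_cast; ring
  · intro x y
    have hx : x ^ n = (x^2)^(2*a+1) := by rw [← pow_mul]; congr 1; omega
    have hy : y ^ n = (y^2)^(2*a+1) := by rw [← pow_mul]; congr 1; omega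
    rw [hx, hy, elNN_expand (2*a+1) (x^2) (y^2), ham]
    refine Eq.trans ((Finset.sum_subset (Finset.range_subset_range.mpr
        (show a+1 ≤ 2*a+1+2 by omega)) ?hz).symm)
      (Eq.trans (Finset.sum_nbij' (i := fun j => 2*a+1 - 2*j) (j := fun k => (2*a+1 - k)/2)
        ?hi ?hj ?hli ?hri ?hterm) (Finset.sum_filter_of_ne (p := fun k => k % 2 = 1) ?hf))
    case hz =>
      intro j hj1 hj2
      simp only [Finset.mem_range] at hj1 hj2
      rw [elNN_vanish (2*a+1) j (by omega)]
      simp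
    case hi =>
      intro j hj
      simp only [Finset.mem_range] at hj
      simp only [Finset.mem_filter, Finset.mem_range]
      omega
    case hj =>
      intro k hk
      simp only [Finset.mem_filter, Finset.mem_range] at hk
      simp only [Finset.mem_range]
      omega
    case hli =>
      intro j hj
      simp only [Finset.mem_range] at hj
      show (2*a+1 - (2*a+1 - 2*j))/2 = j
      omega
    case hri =>
      intro k hk
      simp only [Finset.mem_filter, Finset.mem_range] at hk
      show 2*a+1 - 2*((2*a+1 - k)/2) = k
      omega
    case hterm =>
      intro j hj
      simp only [Finset.mem_range] at hj
      have h1 := key j (by omega)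
      rw [h1]
      rw [show 2*a+1 - (2*a+1 - 2*j) = 2*j from by omega]
      push_cast
      rw [pow_mul]
      ring
    case hf =>
      intro k hk hne
      simp only [Finset.mem_range] at hk
      by_contra hpar
      have h0 : k % 2 = 0 := by omega
      rw [hc_even k (by omega) h0] at hne
      simp at hne
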